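/- Let f, g ∈ L^1[0,1] with Haar supports contained in the dyadic intervals (excluding [0,2]), with disjoint Haar supports, c_I(f) = c_I(g) = 0 for a given dyadic interval I, and ‖f‖ > 0. Then for at least one choice j ∈ {1,2}, setting f' = L_j(f,I) and g' = L_j(g,I) (the same j for both), one has: supp_H(f') ∩ supp_H(g') = ∅, I ∉ supp_H(f') ∪ supp_H(g'), every Haar coefficient of f' (resp. g') is a Haar coefficient of f (resp. g) or zero, ‖f' + g'‖ > 0, and ‖f‖/‖f+g‖ ≤ ‖f'‖/‖f'+g'‖. -/

import Mathlib

open MeasureTheory Set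
open scoped Classical

noncomputable section

/-- The dyadic interval `[k/2^n, (k+1)/2^n)`. -/
def dyadic (n k : ℕ) : Set ℝ := Set.Ico ((k : ℝ) / 2 ^ n) (((k : ℝ) + 1) / 2 ^ n)

/-- Left half `I⁺` of a dyadic interval. -/
def dplus (n k : ℕ) : Set ℝ := dyadic (n + 1) (2 * k)

/-- Right half `I⁻` of a dyadic interval. -/
def dminus (n k : ℕ) : Set ℝ := dyadic (n + 1) (2 * k + 1)

/-- Haar coefficient `c_I(f)` with respect to the L¹-normalized Haar system. -/
def haarC (f : ℝ → ℝ) (n k : ℕ) : ℝ :=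
  (∫ x in dplus n k, f x) - ∫ x in dminus n k, f x

/-- The L¹-normalized Haar function `h_I`. -/
def haarF (n k : ℕ) : ℝ → ℝ := fun x =>
  if x ∈ dplus n k then (2 : ℝ) ^ n else if x ∈ dminus n k then -(2 : ℝ) ^ n else 0

/-- Index set for the Haar system: the dyadic intervals of `[0,1]` together with `[0,2]`. -/
inductive HIdx where
  | root : HIdx
  | node : ℕ → ℕ → HIdx
  deriving DecidableEq

/-- Validity of an index: `node n k` encodes `[k/2^n, (k+1)/2^n) ⊆ [0,1)`. -/
def HIdx.valid : HIdx → Prop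
  | .root => True
  | .node n k => k < 2 ^ n

/-- The interval encoded by an index. -/
def HIdx.iset : HIdx → Set ℝ
  | .root => Set.Ico (0 : ℝ) 2
  | .node n k => dyadic n k

/-- Haar coefficient, where `c_{[0,2]}(f) = ∫_{[0,1)} f` (for `f` supported in `[0,1)`). -/
def hcoef (f : ℝ → ℝ) : HIdx → ℝ
  | .root => ∫ x in Set.Ico (0 : ℝ) 1, f x
  | .node n k => haarC f n k

/-- Symmetrization `L₁(f, I)`: copy `f` from the left half `I⁺` onto the right half `I⁻`. -/
def symmL (f : ℝ → ℝ) (n k : ℕ) : ℝ → ℝ := fun x =>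
  if x ∈ dminus n k then f (x - 1 / 2 ^ (n + 1)) else f x

/-- Symmetrization `L₂(f, I)`: copy `f` from the right half `I⁻` onto the left half `I⁺`. -/
def symmR (f : ℝ → ℝ) (n k : ℕ) : ℝ → ℝ := fun x =>
  if x ∈ dplus n k then f (x + 1 / 2 ^ (n + 1)) else f x



lemma dyadic_mble (n k : ℕ) : MeasurableSet (dyadic n k) := measurableSet_Ico
lemma dplus_mble (n k : ℕ) : MeasurableSet (dplus n k) := measurableSet_Ico
lemma dminus_mble (n k : ℕ) : MeasurableSet (dminus n k) := measurableSet_Ico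

lemma dplus_eq (n k : ℕ) :
    dplus n k = Set.Ico ((k:ℝ) / 2 ^ n) ((2*(k:ℝ)+1) / 2 ^ (n+1)) := by
  unfold dplus dyadic
  push_cast
  congr 1
  rw [pow_succ]; ring

lemma dminus_eq (n k : ℕ) :
    dminus n k = Set.Ico ((2*(k:ℝ)+1) / 2 ^ (n+1)) (((k:ℝ)+1) / 2 ^ n) := by
  unfold dminus dyadic
  push_cast
  congr 1
  rw [pow_succ]; ring

lemma mid_lb (n k : ℕ) : (k:ℝ) / 2 ^ n ≤ (2*(k:ℝ)+1) / 2 ^ (n+1) := by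
  rw [div_le_div_iff₀ (by positivity) (by positivity), pow_succ]
  nlinarith [pow_pos (by norm_num : (0:ℝ) < 2) n, (by positivity : (0:ℝ) ≤ (k:ℝ))]

lemma mid_ub (n k : ℕ) : (2*(k:ℝ)+1) / 2 ^ (n+1) ≤ ((k:ℝ)+1) / 2 ^ n := by
  rw [div_le_div_iff₀ (by positivity) (by positivity), pow_succ]
  nlinarith [pow_pos (by norm_num : (0:ℝ) < 2) n, (by positivity : (0:ℝ) ≤ (k:ℝ))]

lemma dyadic_split (n k : ℕ) : dyadic n k = dplus n k ∪ dminus n k := by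
  rw [dplus_eq, dminus_eq, Set.Ico_union_Ico_eq_Ico (mid_lb n k) (mid_ub n k)]
  rfl

lemma dplus_disj_dminus (n k : ℕ) : Disjoint (dplus n k) (dminus n k) := by
  rw [dplus_eq, dminus_eq]
  exact Set.Ico_disjoint_Ico_same

lemma dplus_subset (n k : ℕ) : dplus n k ⊆ dyadic n k := by
  rw [dyadic_split]; exact Set.subset_union_left

lemma dminus_subset (n k : ℕ) : dminus n k ⊆ dyadic n k := by
  rw [dyadic_split]; exact Set.subset_union_right

lemma dyadic_disjoint {n k k' : ℕ} (h : k ≠ k') : Disjoint (dyadic n k) (dyadic n k') := by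
  unfold dyadic
  rw [Set.Ico_disjoint_Ico]
  rcases Nat.lt_or_ge k k' with h' | h'
  · have h1 : (k:ℝ) + 1 ≤ k' := by exact_mod_cast h'
    refine le_trans (min_le_left _ _) (le_trans ?_ (le_max_right _ _))
    gcongr
  · have h'' : k' < k := lt_of_le_of_ne h' (Ne.symm h)
    have h1 : (k':ℝ) + 1 ≤ k := by exact_mod_cast h''
    refine le_trans (min_le_right _ _) (le_trans ?_ (le_max_left _ _))
    gcongr

lemma dyadic_subset_dyadic {n d k j : ℕ} (hjk : j / 2 ^ d = k) :
    dyadic (n + d) j ⊆ dyadic n k := by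
  have h1 : k * 2 ^ d ≤ j := by
    subst hjk; exact Nat.div_mul_le_self j (2 ^ d)
  have h2 : j + 1 ≤ (k + 1) * 2 ^ d := by
    have hm := Nat.div_add_mod j (2 ^ d)
    have hlt : j % 2 ^ d < 2 ^ d := Nat.mod_lt _ (Nat.pow_pos (by norm_num))
    subst hjk
    nlinarith [Nat.div_mul_le_self j (2 ^ d)]
  unfold dyadic
  apply Set.Ico_subset_Ico
  · rw [div_le_div_iff₀ (by positivity) (by positivity), pow_add]
    have h1' : (k:ℝ) * 2 ^ d ≤ j := by exact_mod_cast h1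
    nlinarith [pow_pos (by norm_num : (0:ℝ) < 2) n]
  · rw [div_le_div_iff₀ (by positivity) (by positivity), pow_add]
    have h2' : (j:ℝ) + 1 ≤ ((k:ℝ) + 1) * 2 ^ d := by exact_mod_cast h2
    nlinarith [pow_pos (by norm_num : (0:ℝ) < 2) n]

lemma dyadic_subset_spec {m j n k : ℕ} (hsub : dyadic m j ⊆ dyadic n k) :
    n ≤ m ∧ j / 2 ^ (m - n) = k := by
  have hlt : (j:ℝ) / 2 ^ m < ((j:ℝ) + 1) / 2 ^ m := by
    rw [div_lt_div_iff₀ (by positivity) (by positivity)]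
    nlinarith [pow_pos (by norm_num : (0:ℝ) < 2) m]
  rw [dyadic, dyadic, Set.Ico_subset_Ico_iff hlt] at hsub
  obtain ⟨h1, h2⟩ := hsub
  have hnm : n ≤ m := by
    by_contra hc
    push_neg at hc
    have ej : ((j:ℝ)+1) / 2 ^ m = (j:ℝ)/2^m + 1/2^m := by ring
    have ek : ((k:ℝ)+1) / 2 ^ n = (k:ℝ)/2^n + 1/2^n := by ring
    have e1 : (1:ℝ) / 2 ^ m ≤ 1 / 2 ^ n := by rw [ej] at h2; rw [ek] at h2; linarith
    have e2 : (2:ℝ) ^ m < 2 ^ n := by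
      exact pow_lt_pow_right₀ (by norm_num) hc
    have e3 : (1:ℝ) / 2 ^ n < 1 / 2 ^ m :=
      div_lt_div_of_pos_left one_pos (by positivity) e2
    linarith
  refine ⟨hnm, ?_⟩
  obtain ⟨d, rfl⟩ : ∃ d, m = n + d := ⟨m - n, by omega⟩
  rw [show n + d - n = d from by omega]
  rw [div_le_div_iff₀ (by positivity) (by positivity)] at h1 h2
  rw [pow_add] at h1 h2
  have hp : (0:ℝ) < 2 ^ n := by positivity
  have h1' : (k:ℝ) * 2 ^ d ≤ j := by nlinarith
  have h2' : (j:ℝ) + 1 ≤ ((k:ℝ) + 1) * 2 ^ d := by nlinarith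
  have h1n : k * 2 ^ d ≤ j := by exact_mod_cast h1'
  have h2n : j + 1 ≤ (k + 1) * 2 ^ d := by exact_mod_cast h2'
  have hd : 0 < 2 ^ d := Nat.pow_pos (by norm_num)
  exact Nat.div_eq_of_lt_le h1n (by omega)

lemma dyadic_rel (m j n k : ℕ) :
    dyadic m j ⊆ dyadic n k ∨ dyadic n k ⊆ dyadic m j ∨
      Disjoint (dyadic m j) (dyadic n k) := by
  rcases le_or_gt n m with h | h
  · obtain ⟨d, rfl⟩ : ∃ d, m = n + d := ⟨m - n, by omega⟩
    by_cases hq : j / 2 ^ d = k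
    · exact Or.inl (dyadic_subset_dyadic hq)
    · exact Or.inr (Or.inr ((dyadic_disjoint hq).mono_left (dyadic_subset_dyadic rfl)))
  · obtain ⟨d, rfl⟩ : ∃ d, n = m + d := ⟨n - m, by omega⟩
    by_cases hq : k / 2 ^ d = j
    · exact Or.inr (Or.inl (dyadic_subset_dyadic hq))
    · exact Or.inr (Or.inr ((dyadic_disjoint hq).mono_left (dyadic_subset_dyadic rfl)).symm)

lemma dyadic_subset_Ico01 {n k : ℕ} (hk : k < 2 ^ n) : dyadic n k ⊆ Set.Ico (0:ℝ) 1 := by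
  have h := dyadic_subset_dyadic (n := 0) (d := n) (j := k) (k := 0) (Nat.div_eq_of_lt hk)
  rw [Nat.zero_add] at h
  refine h.trans ?_
  unfold dyadic
  norm_num


-- set integral over Ico equals interval integral
lemma ico_int (h : ℝ → ℝ) {a b : ℝ} (hab : a ≤ b) :
    ∫ x in Set.Ico a b, h x = ∫ x in a..b, h x := by
  rw [intervalIntegral.integral_of_le hab, integral_Ico_eq_integral_Ioo,
    integral_Ioc_eq_integral_Ioo]

lemma ico_shift (h : ℝ → ℝ) {a b : ℝ} (c : ℝ) (hab : a ≤ b) :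
    ∫ x in Set.Ico a b, h (x - c) = ∫ x in Set.Ico (a - c) (b - c), h x := by
  rw [ico_int _ hab, ico_int _ (by linarith : a - c ≤ b - c),
    intervalIntegral.integral_comp_sub_right h c]

-- congruence away from dminus
lemma integral_symmL_of_disj (f : ℝ → ℝ) (n k : ℕ) {S : Set ℝ} (hS : MeasurableSet S)
    (hd : Disjoint S (dminus n k)) :
    ∫ x in S, symmL f n k x = ∫ x in S, f x := by
  apply setIntegral_congr_fun hS
  intro x hx
  have : x ∉ dminus n k := fun hm => (Set.disjoint_left.mp hd hx) hm
  simp [symmL, this]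

lemma integral_symmR_of_disj (f : ℝ → ℝ) (n k : ℕ) {S : Set ℝ} (hS : MeasurableSet S)
    (hd : Disjoint S (dplus n k)) :
    ∫ x in S, symmR f n k x = ∫ x in S, f x := by
  apply setIntegral_congr_fun hS
  intro x hx
  have : x ∉ dplus n k := fun hm => (Set.disjoint_left.mp hd hx) hm
  simp [symmR, this]


lemma pow_le_of_div_eq {d j q : ℕ} (h2 : j / 2 ^ d = q) (hq : 1 ≤ q) : 2 ^ d ≤ j := by
  have := Nat.div_mul_le_self j (2 ^ d)
  rw [h2] at this
  nlinarith

lemma integral_symmL_shift (f : ℝ → ℝ) (n k d j : ℕ) (h2 : j / 2 ^ d = 2 * k + 1) :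
    ∫ x in dyadic (n+1+d) j, symmL f n k x
      = ∫ x in dyadic (n+1+d) (j - 2 ^ d), f x := by
  have hsub : dyadic (n+1+d) j ⊆ dminus n k := dyadic_subset_dyadic (n := n+1) h2
  have hstep1 : ∫ x in dyadic (n+1+d) j, symmL f n k x
      = ∫ x in dyadic (n+1+d) j, f (x - 1/2^(n+1)) :=
    setIntegral_congr_fun (dyadic_mble _ _) (fun x hx => if_pos (hsub hx))
  rw [hstep1]
  unfold dyadic
  have hle : (j:ℝ)/2^(n+1+d) ≤ ((j:ℝ)+1)/2^(n+1+d) := by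
    rw [div_le_div_iff₀ (by positivity) (by positivity)]
    nlinarith [pow_pos (by norm_num : (0:ℝ) < 2) (n+1+d)]
  rw [ico_shift _ _ hle]
  have hge : 2 ^ d ≤ j := pow_le_of_div_eq h2 (by omega)
  have hcast : ((j - 2^d : ℕ) : ℝ) = (j:ℝ) - 2^d := by
    push_cast [Nat.cast_sub hge]; ring
  have e1 : (j:ℝ)/2^(n+1+d) - 1/2^(n+1) = ((j - 2^d : ℕ) : ℝ)/2^(n+1+d) := by
    rw [hcast, pow_add]; field_simp
  have e2 : ((j:ℝ)+1)/2^(n+1+d) - 1/2^(n+1) = (((j - 2^d : ℕ) : ℝ)+1)/2^(n+1+d) := by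
    rw [hcast, pow_add]; field_simp; ring
  rw [e1, e2]

lemma integral_symmR_shift (f : ℝ → ℝ) (n k d j : ℕ) (h2 : j / 2 ^ d = 2 * k) :
    ∫ x in dyadic (n+1+d) j, symmR f n k x
      = ∫ x in dyadic (n+1+d) (j + 2 ^ d), f x := by
  have hsub : dyadic (n+1+d) j ⊆ dplus n k := dyadic_subset_dyadic (n := n+1) h2
  have hstep1 : ∫ x in dyadic (n+1+d) j, symmR f n k x
      = ∫ x in dyadic (n+1+d) j, f (x - (-(1/2^(n+1)))) := by
    refine setIntegral_congr_fun (dyadic_mble _ _) (fun x hx => ?_)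
    rw [sub_neg_eq_add]
    exact if_pos (hsub hx)
  rw [hstep1]
  unfold dyadic
  have hle : (j:ℝ)/2^(n+1+d) ≤ ((j:ℝ)+1)/2^(n+1+d) := by
    rw [div_le_div_iff₀ (by positivity) (by positivity)]
    nlinarith [pow_pos (by norm_num : (0:ℝ) < 2) (n+1+d)]
  rw [ico_shift _ _ hle]
  have hcast : ((j + 2^d : ℕ) : ℝ) = (j:ℝ) + 2^d := by push_cast; ring
  have e1 : (j:ℝ)/2^(n+1+d) - (-(1/2^(n+1))) = ((j + 2^d : ℕ) : ℝ)/2^(n+1+d) := by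
    rw [hcast, pow_add]; field_simp; ring
  have e2 : ((j:ℝ)+1)/2^(n+1+d) - (-(1/2^(n+1))) = (((j + 2^d : ℕ) : ℝ)+1)/2^(n+1+d) := by
    rw [hcast, pow_add]; field_simp; ring
  rw [e1, e2]

lemma integral_symmL_dminus (f : ℝ → ℝ) (n k : ℕ) :
    ∫ x in dminus n k, symmL f n k x = ∫ x in dplus n k, f x := by
  have h := integral_symmL_shift f n k 0 (2*k+1) (by simp)
  simpa [dminus, dplus, Nat.add_sub_cancel] using h

lemma integral_symmR_dplus (f : ℝ → ℝ) (n k : ℕ) :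
    ∫ x in dplus n k, symmR f n k x = ∫ x in dminus n k, f x := by
  have h := integral_symmR_shift f n k 0 (2*k) (by simp)
  simpa [dminus, dplus] using h

lemma symmL_integrable {f : ℝ → ℝ} (hf : Integrable f) (n k : ℕ) :
    Integrable (symmL f n k) := by
  have heq : symmL f n k = fun x => (dminus n k).indicator (fun y => f (y - 1/2^(n+1))) x
      + (dminus n k)ᶜ.indicator f x := by
    funext x
    by_cases hx : x ∈ dminus n k <;> simp [symmL, hx]
  rw [heq]
  exact ((hf.comp_sub_right _).indicator (dyadic_mble _ _)).add
    (hf.indicator (dyadic_mble _ _).compl)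

lemma symmR_integrable {f : ℝ → ℝ} (hf : Integrable f) (n k : ℕ) :
    Integrable (symmR f n k) := by
  have heq : symmR f n k = fun x => (dplus n k).indicator (fun y => f (y + 1/2^(n+1))) x
      + (dplus n k)ᶜ.indicator f x := by
    funext x
    by_cases hx : x ∈ dplus n k <;> simp [symmR, hx]
  rw [heq]
  have : Integrable (fun y : ℝ => f (y + 1/2^(n+1))) := by
    have := hf.comp_sub_right (-(1/2^(n+1) : ℝ))
    simpa [sub_neg_eq_add] using this
  exact (this.indicator (dyadic_mble _ _)).add (hf.indicator (dyadic_mble _ _).compl)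


lemma haarC_halves {f : ℝ → ℝ} {n k : ℕ} (hcf : haarC f n k = 0) :
    ∫ x in dplus n k, f x = ∫ x in dminus n k, f x := by
  unfold haarC at hcf; linarith

lemma integral_symmL_superset {f : ℝ → ℝ} (hf : Integrable f) {n k : ℕ}
    (hcf : haarC f n k = 0) {S : Set ℝ} (hS : MeasurableSet S)
    (hsub : dyadic n k ⊆ S) :
    ∫ x in S, symmL f n k x = ∫ x in S, f x := by
  have hDs : dminus n k ⊆ S := (dminus_subset n k).trans hsub
  have hsplit : S = (S \ dminus n k) ∪ dminus n k := (Set.diff_union_of_subset hDs).symm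
  have hdisj : Disjoint (S \ dminus n k) (dminus n k) := disjoint_sdiff_left
  rw [hsplit,
    setIntegral_union hdisj (dminus_mble n k) ((symmL_integrable hf n k).integrableOn)
      ((symmL_integrable hf n k).integrableOn),
    setIntegral_union hdisj (dminus_mble n k) hf.integrableOn hf.integrableOn]
  congr 1
  · exact integral_symmL_of_disj f n k (hS.diff (dminus_mble n k)) disjoint_sdiff_left
  · rw [integral_symmL_dminus, haarC_halves hcf]

lemma integral_symmR_superset {f : ℝ → ℝ} (hf : Integrable f) {n k : ℕ}
    (hcf : haarC f n k = 0) {S : Set ℝ} (hS : MeasurableSet S)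
    (hsub : dyadic n k ⊆ S) :
    ∫ x in S, symmR f n k x = ∫ x in S, f x := by
  have hDs : dplus n k ⊆ S := (dplus_subset n k).trans hsub
  have hsplit : S = (S \ dplus n k) ∪ dplus n k := (Set.diff_union_of_subset hDs).symm
  have hdisj : Disjoint (S \ dplus n k) (dplus n k) := disjoint_sdiff_left
  rw [hsplit,
    setIntegral_union hdisj (dplus_mble n k) ((symmR_integrable hf n k).integrableOn)
      ((symmR_integrable hf n k).integrableOn),
    setIntegral_union hdisj (dplus_mble n k) hf.integrableOn hf.integrableOn]
  congr 1
  · exact integral_symmR_of_disj f n k (hS.diff (dplus_mble n k)) disjoint_sdiff_left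
  · rw [integral_symmR_dplus, haarC_halves hcf]

lemma haarC_symmL_self (f : ℝ → ℝ) (n k : ℕ) : haarC (symmL f n k) n k = 0 := by
  unfold haarC
  rw [integral_symmL_dminus,
    integral_symmL_of_disj f n k (dplus_mble n k) (dplus_disj_dminus n k), sub_self]

lemma haarC_symmR_self (f : ℝ → ℝ) (n k : ℕ) : haarC (symmR f n k) n k = 0 := by
  unfold haarC
  rw [integral_symmR_dplus,
    integral_symmR_of_disj f n k (dminus_mble n k) (dplus_disj_dminus n k).symm, sub_self]

lemma haarC_symmL_shift (f : ℝ → ℝ) (n k d j : ℕ) (h2 : j / 2 ^ d = 2 * k + 1) :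
    haarC (symmL f n k) (n+1+d) j = haarC f (n+1+d) (j - 2 ^ d) := by
  have hge : 2 ^ d ≤ j := pow_le_of_div_eq h2 (by omega)
  have hpow : 2 ^ (d+1) = 2 * 2 ^ d := by ring
  have h2a : (2*j) / 2 ^ (d+1) = 2*k+1 := by
    rw [hpow, Nat.mul_div_mul_left _ _ (by norm_num)]; exact h2
  have h2b : (2*j+1) / 2 ^ (d+1) = 2*k+1 := by
    rw [hpow, ← Nat.div_div_eq_div_mul, show (2*j+1)/2 = j from by omega]
    exact h2
  unfold haarC
  have e1 : dplus (n+1+d) j = dyadic (n+1+(d+1)) (2*j) := rfl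
  have e2 : dminus (n+1+d) j = dyadic (n+1+(d+1)) (2*j+1) := rfl
  rw [e1, e2, integral_symmL_shift f n k (d+1) (2*j) h2a,
    integral_symmL_shift f n k (d+1) (2*j+1) h2b,
    show 2*j - 2^(d+1) = 2*(j - 2^d) from by omega,
    show 2*j+1 - 2^(d+1) = 2*(j - 2^d)+1 from by omega]
  rfl

lemma haarC_symmR_shift (f : ℝ → ℝ) (n k d j : ℕ) (h2 : j / 2 ^ d = 2 * k) :
    haarC (symmR f n k) (n+1+d) j = haarC f (n+1+d) (j + 2 ^ d) := by
  have hpow : 2 ^ (d+1) = 2 * 2 ^ d := by ring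
  have h2a : (2*j) / 2 ^ (d+1) = 2*k := by
    rw [hpow, Nat.mul_div_mul_left _ _ (by norm_num)]; exact h2
  have h2b : (2*j+1) / 2 ^ (d+1) = 2*k := by
    rw [hpow, ← Nat.div_div_eq_div_mul, show (2*j+1)/2 = j from by omega]
    exact h2
  unfold haarC
  have e1 : dplus (n+1+d) j = dyadic (n+1+(d+1)) (2*j) := rfl
  have e2 : dminus (n+1+d) j = dyadic (n+1+(d+1)) (2*j+1) := rfl
  rw [e1, e2, integral_symmR_shift f n k (d+1) (2*j) h2a,
    integral_symmR_shift f n k (d+1) (2*j+1) h2b,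
    show 2*j + 2^(d+1) = 2*(j + 2^d) from by omega,
    show 2*j+1 + 2^(d+1) = 2*(j + 2^d)+1 from by omega]
  rfl

lemma haarC_symmL_unch (f : ℝ → ℝ) (hf : Integrable f) (n k : ℕ)
    (hcf : haarC f n k = 0) (m j : ℕ) (hmn : ¬(m = n ∧ j = k))
    (hns : ¬(n + 1 ≤ m ∧ j / 2 ^ (m - n - 1) = 2 * k + 1)) :
    haarC (symmL f n k) m j = haarC f m j := by
  rcases dyadic_rel m j n k with hsub | hsup | hdis
  · -- J ⊆ I, so J ⊆ I⁺
    obtain ⟨hnm, hdiv⟩ := dyadic_subset_spec hsub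
    have hmne : m ≠ n := by
      rintro rfl
      exact hmn ⟨rfl, by simpa using hdiv⟩
    obtain ⟨d, rfl⟩ : ∃ d, m = n + 1 + d := ⟨m - n - 1, by omega⟩
    rw [show n + 1 + d - n = d + 1 from by omega] at hdiv
    have hq : j / 2 ^ d / 2 = k := by
      rw [Nat.div_div_eq_div_mul, ← pow_succ]; exact hdiv
    have hql : j / 2 ^ d = 2 * k := by
      have : ¬ (j / 2 ^ d = 2 * k + 1) := fun hc => hns ⟨by omega, by
        rwa [show n + 1 + d - n - 1 = d from by omega]⟩
      omega
    have hsubplus : dyadic (n+1+d) j ⊆ dplus n k := dyadic_subset_dyadic (n := n+1) hql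
    unfold haarC
    rw [integral_symmL_of_disj f n k (dplus_mble _ _)
        ((dplus_disj_dminus n k).mono_left ((dplus_subset (n+1+d) j).trans hsubplus)),
      integral_symmL_of_disj f n k (dminus_mble _ _)
        ((dplus_disj_dminus n k).mono_left ((dminus_subset (n+1+d) j).trans hsubplus))]
  · -- I ⊆ J, strictly
    obtain ⟨hmn', hdiv⟩ := dyadic_subset_spec hsup
    have hmne : m ≠ n := by
      rintro rfl
      rw [show m - m = 0 from by omega] at hdiv
      simp at hdiv
      exact hmn ⟨rfl, hdiv.symm⟩
    obtain ⟨e, rfl⟩ : ∃ e, n = m + 1 + e := ⟨n - m - 1, by omega⟩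
    rw [show m + 1 + e - m = e + 1 from by omega] at hdiv
    have hq : k / 2 ^ e / 2 = j := by
      rw [Nat.div_div_eq_div_mul, ← pow_succ]; exact hdiv
    have hsubq : dyadic (m+1+e) k ⊆ dyadic (m+1) (k / 2 ^ e) := dyadic_subset_dyadic rfl
    have hq2 : k / 2 ^ e = 2 * j ∨ k / 2 ^ e = 2 * j + 1 := by omega
    unfold haarC
    rcases hq2 with hq' | hq'
    · have hIJp : dyadic (m+1+e) k ⊆ dplus m j := by
        rw [hq'] at hsubq; exact hsubq
      have hdisJm : Disjoint (dminus m j) (dminus (m+1+e) k) :=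
        ((dyadic_disjoint (by omega : 2*j+1 ≠ 2*j)).mono_right
          ((dminus_subset (m+1+e) k).trans hIJp))
      rw [integral_symmL_superset hf hcf (dplus_mble m j) hIJp,
        integral_symmL_of_disj f (m+1+e) k (dminus_mble m j) hdisJm]
    · have hIJm : dyadic (m+1+e) k ⊆ dminus m j := by
        rw [hq'] at hsubq; exact hsubq
      have hdisJp : Disjoint (dplus m j) (dminus (m+1+e) k) :=
        ((dyadic_disjoint (by omega : 2*j ≠ 2*j+1)).mono_right
          ((dminus_subset (m+1+e) k).trans hIJm))
      rw [integral_symmL_superset hf hcf (dminus_mble m j) hIJm,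
        integral_symmL_of_disj f (m+1+e) k (dplus_mble m j) hdisJp]
  · -- disjoint
    unfold haarC
    rw [integral_symmL_of_disj f n k (dplus_mble m j)
        (hdis.mono (dplus_subset m j) (dminus_subset n k)),
      integral_symmL_of_disj f n k (dminus_mble m j)
        (hdis.mono (dminus_subset m j) (dminus_subset n k))]

lemma haarC_symmR_unch (f : ℝ → ℝ) (hf : Integrable f) (n k : ℕ)
    (hcf : haarC f n k = 0) (m j : ℕ) (hmn : ¬(m = n ∧ j = k))
    (hns : ¬(n + 1 ≤ m ∧ j / 2 ^ (m - n - 1) = 2 * k)) :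
    haarC (symmR f n k) m j = haarC f m j := by
  rcases dyadic_rel m j n k with hsub | hsup | hdis
  · obtain ⟨hnm, hdiv⟩ := dyadic_subset_spec hsub
    have hmne : m ≠ n := by
      rintro rfl
      exact hmn ⟨rfl, by simpa using hdiv⟩
    obtain ⟨d, rfl⟩ : ∃ d, m = n + 1 + d := ⟨m - n - 1, by omega⟩
    rw [show n + 1 + d - n = d + 1 from by omega] at hdiv
    have hq : j / 2 ^ d / 2 = k := by
      rw [Nat.div_div_eq_div_mul, ← pow_succ]; exact hdiv
    have hql : j / 2 ^ d = 2 * k + 1 := by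
      have : ¬ (j / 2 ^ d = 2 * k) := fun hc => hns ⟨by omega, by
        rwa [show n + 1 + d - n - 1 = d from by omega]⟩
      omega
    have hsubminus : dyadic (n+1+d) j ⊆ dminus n k := dyadic_subset_dyadic (n := n+1) hql
    unfold haarC
    rw [integral_symmR_of_disj f n k (dplus_mble _ _)
        ((dplus_disj_dminus n k).symm.mono_left ((dplus_subset (n+1+d) j).trans hsubminus)),
      integral_symmR_of_disj f n k (dminus_mble _ _)
        ((dplus_disj_dminus n k).symm.mono_left ((dminus_subset (n+1+d) j).trans hsubminus))]
  · obtain ⟨hmn', hdiv⟩ := dyadic_subset_spec hsup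
    have hmne : m ≠ n := by
      rintro rfl
      rw [show m - m = 0 from by omega] at hdiv
      simp at hdiv
      exact hmn ⟨rfl, hdiv.symm⟩
    obtain ⟨e, rfl⟩ : ∃ e, n = m + 1 + e := ⟨n - m - 1, by omega⟩
    rw [show m + 1 + e - m = e + 1 from by omega] at hdiv
    have hq : k / 2 ^ e / 2 = j := by
      rw [Nat.div_div_eq_div_mul, ← pow_succ]; exact hdiv
    have hsubq : dyadic (m+1+e) k ⊆ dyadic (m+1) (k / 2 ^ e) := dyadic_subset_dyadic rfl
    have hq2 : k / 2 ^ e = 2 * j ∨ k / 2 ^ e = 2 * j + 1 := by omega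
    unfold haarC
    rcases hq2 with hq' | hq'
    · have hIJp : dyadic (m+1+e) k ⊆ dplus m j := by
        rw [hq'] at hsubq; exact hsubq
      have hdisJm : Disjoint (dminus m j) (dplus (m+1+e) k) :=
        ((dyadic_disjoint (by omega : 2*j+1 ≠ 2*j)).mono_right
          ((dplus_subset (m+1+e) k).trans hIJp))
      rw [integral_symmR_superset hf hcf (dplus_mble m j) hIJp,
        integral_symmR_of_disj f (m+1+e) k (dminus_mble m j) hdisJm]
    · have hIJm : dyadic (m+1+e) k ⊆ dminus m j := by
        rw [hq'] at hsubq; exact hsubq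
      have hdisJp : Disjoint (dplus m j) (dplus (m+1+e) k) :=
        ((dyadic_disjoint (by omega : 2*j ≠ 2*j+1)).mono_right
          ((dplus_subset (m+1+e) k).trans hIJm))
      rw [integral_symmR_superset hf hcf (dminus_mble m j) hIJm,
        integral_symmR_of_disj f (m+1+e) k (dplus_mble m j) hdisJp]
  · unfold haarC
    rw [integral_symmR_of_disj f n k (dplus_mble m j)
        (hdis.mono (dplus_subset m j) (dplus_subset n k)),
      integral_symmR_of_disj f n k (dminus_mble m j)
        (hdis.mono (dminus_subset m j) (dplus_subset n k))]

def shIdxL (n k m j : ℕ) : ℕ :=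
  if n + 1 ≤ m ∧ j / 2 ^ (m - n - 1) = 2 * k + 1 then j - 2 ^ (m - n - 1) else j

def shIdxR (n k m j : ℕ) : ℕ :=
  if n + 1 ≤ m ∧ j / 2 ^ (m - n - 1) = 2 * k then j + 2 ^ (m - n - 1) else j

lemma shIdxL_lt {n k m j : ℕ} (hj : j < 2 ^ m) : shIdxL n k m j < 2 ^ m := by
  unfold shIdxL
  split
  · exact lt_of_le_of_lt (Nat.sub_le _ _) hj
  · exact hj

lemma shIdxR_lt {n k m j : ℕ} (hk : k < 2 ^ n) (hj : j < 2 ^ m) :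
    shIdxR n k m j < 2 ^ m := by
  unfold shIdxR
  split
  case isTrue h =>
    obtain ⟨h1, h2⟩ := h
    obtain ⟨d, rfl⟩ : ∃ d, m = n + 1 + d := ⟨m - n - 1, by omega⟩
    rw [show n + 1 + d - n - 1 = d from by omega] at h2 ⊢
    have hm := Nat.div_add_mod j (2 ^ d)
    have hlt : j % 2 ^ d < 2 ^ d := Nat.mod_lt _ (Nat.pow_pos (by norm_num))
    have hje : j + 2 ^ d < (2 * k + 2) * 2 ^ d := by nlinarith
    have hpe : 2 ^ (n+1+d) = (2 * 2 ^ n) * 2 ^ d := by ring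
    have : (2 * k + 2) * 2 ^ d ≤ 2 ^ (n+1+d) := by
      rw [hpe]
      have : 2 * k + 2 ≤ 2 * 2 ^ n := by omega
      exact Nat.mul_le_mul_right _ this
    omega
  case isFalse h => exact hj

lemma haarC_symmL (f : ℝ → ℝ) (hf : Integrable f) (n k : ℕ)
    (hcf : haarC f n k = 0) (m j : ℕ) (hmn : ¬(m = n ∧ j = k)) :
    haarC (symmL f n k) m j = haarC f m (shIdxL n k m j) := by
  unfold shIdxL
  split
  case isTrue h =>
    obtain ⟨h1, h2⟩ := h
    obtain ⟨d, rfl⟩ : ∃ d, m = n + 1 + d := ⟨m - n - 1, by omega⟩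
    rw [show n + 1 + d - n - 1 = d from by omega] at h2 ⊢
    exact haarC_symmL_shift f n k d j h2
  case isFalse h => exact haarC_symmL_unch f hf n k hcf m j hmn h

lemma haarC_symmR (f : ℝ → ℝ) (hf : Integrable f) (n k : ℕ)
    (hcf : haarC f n k = 0) (m j : ℕ) (hmn : ¬(m = n ∧ j = k)) :
    haarC (symmR f n k) m j = haarC f m (shIdxR n k m j) := by
  unfold shIdxR
  split
  case isTrue h =>
    obtain ⟨h1, h2⟩ := h
    obtain ⟨d, rfl⟩ : ∃ d, m = n + 1 + d := ⟨m - n - 1, by omega⟩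
    rw [show n + 1 + d - n - 1 = d from by omega] at h2 ⊢
    exact haarC_symmR_shift f n k d j h2
  case isFalse h => exact haarC_symmR_unch f hf n k hcf m j hmn h

lemma dyadic_le (m j : ℕ) : (j:ℝ) / 2 ^ m ≤ ((j:ℝ) + 1) / 2 ^ m := by
  rw [div_le_div_iff₀ (by positivity) (by positivity)]
  nlinarith [pow_pos (by norm_num : (0:ℝ) < 2) m]

/-- Completeness of the dyadic system. -/
lemma ae_zero_of_dyadic {h : ℝ → ℝ} (hInt : Integrable h)
    (hsupp : ∀ x, x ∉ Set.Ico (0:ℝ) 1 → h x = 0)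
    (hdy : ∀ m j : ℕ, j < 2 ^ m → ∫ x in dyadic m j, h x = 0) :
    h =ᵐ[volume] 0 := by
  set F : ℝ → ℝ := fun x => ∫ t in (0:ℝ)..x, h t with hF
  have hFc : Continuous F := hInt.continuous_primitive 0
  have step2 : ∀ m (j : ℕ), j ≤ 2 ^ m → F ((j:ℝ) / 2 ^ m) = 0 := by
    intro m j
    induction j with
    | zero => intro _; simp [hF]
    | succ j ih =>
      intro hj1
      have hj : j < 2 ^ m := by omega
      have hprev : F ((j:ℝ) / 2 ^ m) = 0 := ih (by omega)
      have hadd := intervalIntegral.integral_add_adjacent_intervals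
        (a := 0) (b := (j:ℝ)/2^m) (c := ((j:ℝ)+1)/2^m)
        hInt.intervalIntegrable hInt.intervalIntegrable
      have hseg : ∫ t in ((j:ℝ)/2^m)..(((j:ℝ)+1)/2^m), h t = 0 := by
        rw [intervalIntegral.integral_of_le (dyadic_le m j),
          integral_Ioc_eq_integral_Ioo, ← integral_Ico_eq_integral_Ioo]
        exact hdy m j hj
      have : F (((j:ℝ)+1)/2^m) = 0 := by
        rw [hF]; dsimp only; rw [← hadd, hseg, add_zero]
        exact hprev
      convert this using 2
      push_cast
      ring
  have hF1 : F 1 = 0 := by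
    have := step2 0 1 (by norm_num)
    norm_num at this
    exact this
  have step3 : ∀ x : ℝ, F x = 0 := by
    intro x
    rcases lt_or_ge x 0 with hx | hx
    · have : F x = - ∫ t in x..0, h t := by
        rw [hF]; dsimp only; rw [← intervalIntegral.integral_symm]
      rw [this, intervalIntegral.integral_of_le hx.le, integral_Ioc_eq_integral_Ioo]
      have : ∀ t ∈ Set.Ioo x (0:ℝ), h t = 0 := fun t ht =>
        hsupp t (by simp [Set.mem_Ico]; intro h0; linarith [ht.2])
      rw [setIntegral_congr_fun measurableSet_Ioo this]
      simp
    rcases le_or_gt x 1 with hx1 | hx1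
    · -- 0 ≤ x ≤ 1 : density of dyadic points
      set u : ℕ → ℝ := fun m => ((⌊x * 2 ^ m⌋₊ : ℕ) : ℝ) / 2 ^ m with hu
      have hunn : ∀ m, ⌊x * 2 ^ m⌋₊ ≤ 2 ^ m := by
        intro m
        have : x * 2 ^ m ≤ ((2 ^ m : ℕ) : ℝ) := by
          push_cast; nlinarith [pow_pos (by norm_num : (0:ℝ) < 2) m]
        calc ⌊x * 2 ^ m⌋₊ ≤ ⌊((2 ^ m : ℕ) : ℝ)⌋₊ := Nat.floor_le_floor this
          _ = 2 ^ m := Nat.floor_natCast _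
      have hFu : ∀ m, F (u m) = 0 := fun m => step2 m _ (hunn m)
      have hb1 : ∀ m : ℕ, u m ≤ x := by
        intro m
        rw [hu]; dsimp only
        rw [div_le_iff₀ (by positivity)]
        exact Nat.floor_le (by positivity)
      have hb2 : ∀ m : ℕ, x - (1/2 : ℝ) ^ m ≤ u m := by
        intro m
        rw [hu]; dsimp only
        have := Nat.lt_floor_add_one (x * 2 ^ m)
        rw [sub_le_iff_le_add, div_add' _ _ _ (by positivity)]
        rw [le_div_iff₀ (by positivity)]
        have hp : ((1:ℝ)/2) ^ m * 2 ^ m = 1 := by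
          rw [← mul_pow]; norm_num
        nlinarith [this]
      have htu : Filter.Tendsto u Filter.atTop (nhds x) := by
        have htp : Filter.Tendsto (fun m : ℕ => x - (1/2:ℝ) ^ m) Filter.atTop (nhds x) := by
          have := tendsto_pow_atTop_nhds_zero_of_lt_one
            (by norm_num : (0:ℝ) ≤ 1/2) (by norm_num : (1/2:ℝ) < 1)
          simpa using Filter.Tendsto.const_sub x this
        exact tendsto_of_tendsto_of_tendsto_of_le_of_le htp tendsto_const_nhds hb2 hb1
      have hlim : Filter.Tendsto (fun m => F (u m)) Filter.atTop (nhds (F x)) :=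
        (hFc.continuousAt.tendsto).comp htu
      have hlim0 : Filter.Tendsto (fun m => F (u m)) Filter.atTop (nhds 0) := by
        simp only [hFu]; exact tendsto_const_nhds
      exact tendsto_nhds_unique hlim hlim0
    · -- x > 1
      have hadd := intervalIntegral.integral_add_adjacent_intervals
        (a := 0) (b := (1:ℝ)) (c := x) hInt.intervalIntegrable hInt.intervalIntegrable
      have hseg : ∫ t in (1:ℝ)..x, h t = 0 := by
        rw [intervalIntegral.integral_of_le hx1.le]
        have : ∀ t ∈ Set.Ioc (1:ℝ) x, h t = 0 := fun t ht =>
          hsupp t (by simp [Set.mem_Ico]; intro h0; linarith [ht.1])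
        rw [setIntegral_congr_fun measurableSet_Ioc this]
        simp
      have : F x = F 1 + ∫ t in (1:ℝ)..x, h t := by
        rw [hF]; dsimp only; rw [hadd]
      rw [this, hF1, hseg, add_zero]
  have hIcoz : ∀ a b : ℝ, ∫ x in Set.Ico a b, h x = 0 := by
    intro a b
    rcases le_or_gt b a with hab | hab
    · rw [Set.Ico_eq_empty (by exact fun hc => absurd hab (not_le.mpr hc))]
      simp
    · have hadd := intervalIntegral.integral_add_adjacent_intervals
        (a := 0) (b := a) (c := b) hInt.intervalIntegrable hInt.intervalIntegrable
      have : ∫ t in a..b, h t = F b - F a := by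
        rw [hF]; dsimp only; rw [← hadd]; ring
      rw [step3 a, step3 b] at this
      rw [integral_Ico_eq_integral_Ioo, ← integral_Ioc_eq_integral_Ioo,
        ← intervalIntegral.integral_of_le hab.le]
      simpa using this
  have hTot : ∫ x, h x = 0 := by
    have hcompl : ∫ x in (Set.Ico (0:ℝ) 1)ᶜ, h x = 0 := by
      rw [setIntegral_congr_fun measurableSet_Ico.compl (fun x hx => hsupp x hx)]
      simp
    have := integral_add_compl (measurableSet_Ico : MeasurableSet (Set.Ico (0:ℝ) 1)) hInt
    rw [← this, hIcoz 0 1, hcompl, add_zero]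
  have step4 : ∀ s : Set ℝ, MeasurableSet s → ∫ x in s, h x = 0 := by
    have hgen : (inferInstance : MeasurableSpace ℝ) =
        MeasurableSpace.generateFrom { S : Set ℝ | ∃ l u, l < u ∧ Set.Ico l u = S } :=
      (BorelSpace.measurable_eq (α := ℝ)).trans (borel_eq_generateFrom_Ico ℝ)
    intro s hs
    refine MeasurableSpace.induction_on_inter (C := fun s _ => ∫ x in s, h x = 0) hgen (isPiSystem_Ico (id : ℝ → ℝ) id)
      ?_ ?_ ?_ ?_ s hs
    · simp
    · rintro t ⟨a, b, hab, rfl⟩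
      exact hIcoz a b
    · intro t ht h0
      have := integral_add_compl ht hInt
      rw [hTot, h0] at this
      linarith [this]
    · intro g hdisj hmble h0
      rw [integral_iUnion hmble hdisj hInt.integrableOn]
      simp [h0]
  exact hInt.ae_eq_zero_of_forall_setIntegral_eq_zero (fun s hs _ => step4 s hs)

lemma dyadic_int_zero {f : ℝ → ℝ} (hInt : Integrable f)
    (hroot : ∫ x in Set.Ico (0:ℝ) 1, f x = 0)
    (hC : ∀ m j : ℕ, j < 2 ^ m → haarC f m j = 0) :
    ∀ m j : ℕ, j < 2 ^ m → ∫ x in dyadic m j, f x = 0 := by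
  intro m
  induction m with
  | zero =>
    intro j hj
    have hj0 : j = 0 := by omega
    subst hj0
    have : dyadic 0 0 = Set.Ico (0:ℝ) 1 := by unfold dyadic; norm_num
    rw [this]; exact hroot
  | succ m ih =>
    intro j hj
    have hpow : 2 ^ (m+1) = 2 * 2 ^ m := by ring
    obtain ⟨j', hj'⟩ : ∃ j', j = 2*j' ∨ j = 2*j'+1 := ⟨j/2, by omega⟩
    have hj2 : j' < 2 ^ m := by omega
    have hs := ih j' hj2
    rw [dyadic_split, setIntegral_union (dplus_disj_dminus _ _) (dminus_mble _ _)
      hInt.integrableOn hInt.integrableOn] at hs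
    have hd := hC m j' hj2
    unfold haarC at hd
    have hp : ∫ x in dplus m j', f x = 0 := by linarith
    have hmzero : ∫ x in dminus m j', f x = 0 := by linarith
    rcases hj' with rfl | rfl
    · exact hp
    · exact hmzero

lemma haarC_add (f g : ℝ → ℝ) (hf : Integrable f) (hg : Integrable g) (m j : ℕ) :
    haarC (fun x => f x + g x) m j = haarC f m j + haarC g m j := by
  unfold haarC
  rw [integral_add hf.integrableOn hg.integrableOn,
    integral_add hf.integrableOn hg.integrableOn]
  ring

lemma Kzero (f g : ℝ → ℝ) (hf : Integrable f) (hg : Integrable g)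
    (hfs : ∀ x, x ∉ Set.Ico (0:ℝ) 1 → f x = 0)
    (hfroot : ∫ x in Set.Ico (0:ℝ) 1, f x = 0)
    (hdisj : ∀ m j : ℕ, j < 2 ^ m → haarC f m j ≠ 0 → haarC g m j = 0)
    (hsum0 : ∫ x, |f x + g x| = 0) :
    ∫ x, |f x| = 0 := by
  have habs : (fun x => |f x + g x|) =ᵐ[volume] 0 := by
    refine (integral_eq_zero_iff_of_nonneg (fun x => abs_nonneg _) ?_).mp hsum0
    exact (hf.add hg).abs
  have hae : (fun x => f x + g x) =ᵐ[volume] (0 : ℝ → ℝ) :=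
    habs.mono fun x hx => by
      simp only [Pi.zero_apply] at hx ⊢
      exact abs_eq_zero.mp hx
  have hCz : ∀ m j : ℕ, j < 2 ^ m → haarC f m j = 0 := by
    intro m j hj
    have hsumC : haarC (fun x => f x + g x) m j = 0 := by
      unfold haarC
      rw [integral_eq_zero_of_ae (ae_restrict_of_ae hae),
        integral_eq_zero_of_ae (ae_restrict_of_ae hae), sub_zero]
    rw [haarC_add f g hf hg m j] at hsumC
    by_cases hzero : haarC f m j = 0
    · exact hzero
    · have := hdisj m j hj hzero; linarith
  have hfz := ae_zero_of_dyadic hf hfs (dyadic_int_zero hf hfroot hCz)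
  calc ∫ x, |f x| = ∫ _x, (0:ℝ) :=
        integral_congr_ae (hfz.mono fun x hx => by
          simp only [Pi.zero_apply] at hx; simp [hx])
    _ = 0 := integral_zero _ _

lemma integral_symmL_total (h : ℝ → ℝ) (hh : Integrable h) (n k : ℕ) :
    ∫ x, symmL h n k x
      = (∫ x, h x) - (∫ x in dminus n k, h x) + ∫ x in dplus n k, h x := by
  have hsplit := integral_add_compl (dminus_mble n k) (symmL_integrable hh n k)
  have h1 : ∫ x in dminus n k, symmL h n k x = ∫ x in dplus n k, h x :=
    integral_symmL_dminus h n k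
  have h2 : ∫ x in (dminus n k)ᶜ, symmL h n k x = ∫ x in (dminus n k)ᶜ, h x :=
    integral_symmL_of_disj h n k (dminus_mble n k).compl disjoint_compl_left
  have h3 := integral_add_compl (dminus_mble n k) hh
  linarith

lemma integral_symmR_total (h : ℝ → ℝ) (hh : Integrable h) (n k : ℕ) :
    ∫ x, symmR h n k x
      = (∫ x, h x) - (∫ x in dplus n k, h x) + ∫ x in dminus n k, h x := by
  have hsplit := integral_add_compl (dplus_mble n k) (symmR_integrable hh n k)
  have h1 : ∫ x in dplus n k, symmR h n k x = ∫ x in dminus n k, h x :=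
    integral_symmR_dplus h n k
  have h2 : ∫ x in (dplus n k)ᶜ, symmR h n k x = ∫ x in (dplus n k)ᶜ, h x :=
    integral_symmR_of_disj h n k (dplus_mble n k).compl disjoint_compl_left
  have h3 := integral_add_compl (dplus_mble n k) hh
  linarith

lemma symmL_supp {f : ℝ → ℝ} {n k : ℕ} (hk : k < 2 ^ n)
    (hfs : ∀ x, x ∉ Set.Ico (0:ℝ) 1 → f x = 0) :
    ∀ x, x ∉ Set.Ico (0:ℝ) 1 → symmL f n k x = 0 := by
  intro x hx
  unfold symmL
  split
  case isTrue hmem =>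
    exact absurd (dyadic_subset_Ico01 hk ((dminus_subset n k) hmem)) hx
  case isFalse _ => exact hfs x hx

lemma symmR_supp {f : ℝ → ℝ} {n k : ℕ} (hk : k < 2 ^ n)
    (hfs : ∀ x, x ∉ Set.Ico (0:ℝ) 1 → f x = 0) :
    ∀ x, x ∉ Set.Ico (0:ℝ) 1 → symmR f n k x = 0 := by
  intro x hx
  unfold symmR
  split
  case isTrue hmem =>
    exact absurd (dyadic_subset_Ico01 hk ((dplus_subset n k) hmem)) hx
  case isFalse _ => exact hfs x hx







/-- Lemma 3.4: one of the two simultaneous symmetrizations of `(f, g)` on `I` keeps the Haar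
supports disjoint, kills the coefficient at `I`, only reuses old coefficients, and does not
decrease the ratio `‖f‖/‖f+g‖`. -/
theorem stmt8 (f g : ℝ → ℝ) (hf : Integrable f) (hg : Integrable g)
    (hfs : ∀ x, x ∉ Set.Ico (0 : ℝ) 1 → f x = 0)
    (hgs : ∀ x, x ∉ Set.Ico (0 : ℝ) 1 → g x = 0)
    (hfroot : hcoef f HIdx.root = 0) (hgroot : hcoef g HIdx.root = 0)
    (hdisj : ∀ I : HIdx, I.valid → hcoef f I ≠ 0 → hcoef g I = 0)
    (n k : ℕ) (hk : k < 2 ^ n) (hcf : haarC f n k = 0) (hcg : haarC g n k = 0)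
    (hfpos : 0 < ∫ x, |f x|) :
    ∃ f' g' : ℝ → ℝ,
      ((f' = symmL f n k ∧ g' = symmL g n k) ∨ (f' = symmR f n k ∧ g' = symmR g n k)) ∧
      (∀ I : HIdx, I.valid → hcoef f' I ≠ 0 → hcoef g' I = 0) ∧
      haarC f' n k = 0 ∧ haarC g' n k = 0 ∧
      (∀ m j : ℕ, j < 2 ^ m → haarC f' m j = 0 ∨
        ∃ m' j' : ℕ, j' < 2 ^ m' ∧ haarC f' m j = haarC f m' j') ∧
      (∀ m j : ℕ, j < 2 ^ m → haarC g' m j = 0 ∨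
        ∃ m' j' : ℕ, j' < 2 ^ m' ∧ haarC g' m j = haarC g m' j') ∧
      0 < (∫ x, |f' x + g' x|) ∧
      (∫ x, |f x|) / (∫ x, |f x + g x|) ≤ (∫ x, |f' x|) / ∫ x, |f' x + g' x| := by
  classical
  -- pointwise identities
  have habsL1 : ∀ p : ℝ → ℝ, (fun x => |symmL p n k x|) = symmL (fun y => |p y|) n k := by
    intro p; funext x; by_cases hx : x ∈ dminus n k <;> simp [symmL, hx]
  have habsR1 : ∀ p : ℝ → ℝ, (fun x => |symmR p n k x|) = symmR (fun y => |p y|) n k := by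
    intro p; funext x; by_cases hx : x ∈ dplus n k <;> simp [symmR, hx]
  have habsL2 : (fun x => |symmL f n k x + symmL g n k x|)
      = symmL (fun y => |f y + g y|) n k := by
    funext x; by_cases hx : x ∈ dminus n k <;> simp [symmL, hx]
  have habsR2 : (fun x => |symmR f n k x + symmR g n k x|)
      = symmR (fun y => |f y + g y|) n k := by
    funext x; by_cases hx : x ∈ dplus n k <;> simp [symmR, hx]
  -- transfer of coefficients
  have htransL : ∀ p : ℝ → ℝ, Integrable p → haarC p n k = 0 →
      ∀ m j : ℕ, j < 2 ^ m → haarC (symmL p n k) m j = 0 ∨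
        ∃ m' j' : ℕ, j' < 2 ^ m' ∧ haarC (symmL p n k) m j = haarC p m' j' := by
    intro p hp hcp m j hj
    by_cases hmn : m = n ∧ j = k
    · left; obtain ⟨rfl, rfl⟩ := hmn; exact haarC_symmL_self p _ _
    · right; exact ⟨m, shIdxL n k m j, shIdxL_lt hj, haarC_symmL p hp n k hcp m j hmn⟩
  have htransR : ∀ p : ℝ → ℝ, Integrable p → haarC p n k = 0 →
      ∀ m j : ℕ, j < 2 ^ m → haarC (symmR p n k) m j = 0 ∨
        ∃ m' j' : ℕ, j' < 2 ^ m' ∧ haarC (symmR p n k) m j = haarC p m' j' := by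
    intro p hp hcp m j hj
    by_cases hmn : m = n ∧ j = k
    · left; obtain ⟨rfl, rfl⟩ := hmn; exact haarC_symmR_self p _ _
    · right; exact ⟨m, shIdxR n k m j, shIdxR_lt hk hj, haarC_symmR p hp n k hcp m j hmn⟩
  -- disjointness of supports after symmetrization
  have hdisjL : ∀ I : HIdx, I.valid →
      hcoef (symmL f n k) I ≠ 0 → hcoef (symmL g n k) I = 0 := by
    intro I hv
    cases I with
    | root =>
      intro _
      show (∫ x in Set.Ico (0:ℝ) 1, symmL g n k x) = 0
      rw [integral_symmL_superset hg hcg measurableSet_Ico (dyadic_subset_Ico01 hk)]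
      exact hgroot
    | node m j =>
      intro hne
      show haarC (symmL g n k) m j = 0
      replace hne : haarC (symmL f n k) m j ≠ 0 := hne
      by_cases hmn : m = n ∧ j = k
      · obtain ⟨rfl, rfl⟩ := hmn
        exact haarC_symmL_self g _ _
      · rw [haarC_symmL g hg n k hcg m j hmn]
        rw [haarC_symmL f hf n k hcf m j hmn] at hne
        exact hdisj (HIdx.node m (shIdxL n k m j)) (shIdxL_lt hv) hne
  have hdisjR : ∀ I : HIdx, I.valid →
      hcoef (symmR f n k) I ≠ 0 → hcoef (symmR g n k) I = 0 := by
    intro I hv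
    cases I with
    | root =>
      intro _
      show (∫ x in Set.Ico (0:ℝ) 1, symmR g n k x) = 0
      rw [integral_symmR_superset hg hcg measurableSet_Ico (dyadic_subset_Ico01 hk)]
      exact hgroot
    | node m j =>
      intro hne
      show haarC (symmR g n k) m j = 0
      replace hne : haarC (symmR f n k) m j ≠ 0 := hne
      by_cases hmn : m = n ∧ j = k
      · obtain ⟨rfl, rfl⟩ := hmn
        exact haarC_symmR_self g _ _
      · rw [haarC_symmR g hg n k hcg m j hmn]
        rw [haarC_symmR f hf n k hcf m j hmn] at hne
        exact hdisj (HIdx.node m (shIdxR n k m j)) (shIdxR_lt hk hv) hne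
  -- numeric abbreviations
  set A := ∫ x, |f x| with hAdef
  set B := ∫ x, |f x + g x| with hBdef
  set AL := ∫ x, |symmL f n k x| with hALdef
  set BL := ∫ x, |symmL f n k x + symmL g n k x| with hBLdef
  set AR := ∫ x, |symmR f n k x| with hARdef
  set BR := ∫ x, |symmR f n k x + symmR g n k x| with hBRdef
  have hALv : AL = A - (∫ x in dminus n k, |f x|) + ∫ x in dplus n k, |f x| := by
    rw [hALdef, habsL1 f]
    exact integral_symmL_total (fun y => |f y|) hf.abs n k
  have hARv : AR = A - (∫ x in dplus n k, |f x|) + ∫ x in dminus n k, |f x| := by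
    rw [hARdef, habsR1 f]
    exact integral_symmR_total (fun y => |f y|) hf.abs n k
  have hBLv : BL = B - (∫ x in dminus n k, |f x + g x|) + ∫ x in dplus n k, |f x + g x| := by
    rw [hBLdef, habsL2]
    exact integral_symmL_total (fun y => |f y + g y|) (hf.add hg).abs n k
  have hBRv : BR = B - (∫ x in dplus n k, |f x + g x|) + ∫ x in dminus n k, |f x + g x| := by
    rw [hBRdef, habsR2]
    exact integral_symmR_total (fun y => |f y + g y|) (hf.add hg).abs n k
  have hsumA : AL + AR = 2 * A := by rw [hALv, hARv]; ring
  have hsumB : BL + BR = 2 * B := by rw [hBLv, hBRv]; ring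
  have hB0 : 0 ≤ B := integral_nonneg fun x => abs_nonneg _
  have hBL0 : 0 ≤ BL := integral_nonneg fun x => abs_nonneg _
  have hBR0 : 0 ≤ BR := integral_nonneg fun x => abs_nonneg _
  have hKz : B = 0 → A = 0 := fun h0 =>
    Kzero f g hf hg hfs hfroot (fun m j hj => hdisj (.node m j) hj) h0
  have hBpos : 0 < B := by
    rcases hB0.lt_or_eq with h | h
    · exact h
    · exfalso; have := hKz h.symm; linarith
  have hKzL : BL = 0 → AL = 0 := by
    intro h0
    refine Kzero (symmL f n k) (symmL g n k) (symmL_integrable hf n k)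
      (symmL_integrable hg n k) (symmL_supp hk hfs) ?_ ?_ h0
    · rw [integral_symmL_superset hf hcf measurableSet_Ico (dyadic_subset_Ico01 hk)]
      exact hfroot
    · exact fun m j hj hne => hdisjL (.node m j) hj hne
  have hKzR : BR = 0 → AR = 0 := by
    intro h0
    refine Kzero (symmR f n k) (symmR g n k) (symmR_integrable hf n k)
      (symmR_integrable hg n k) (symmR_supp hk hfs) ?_ ?_ h0
    · rw [integral_symmR_superset hf hcf measurableSet_Ico (dyadic_subset_Ico01 hk)]
      exact hfroot
    · exact fun m j hj hne => hdisjR (.node m j) hj hne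
  by_cases hcase : 0 < BL ∧ A * BL ≤ AL * B
  · refine ⟨symmL f n k, symmL g n k, Or.inl ⟨rfl, rfl⟩, hdisjL,
      haarC_symmL_self f n k, haarC_symmL_self g n k,
      htransL f hf hcf, htransL g hg hcg, ?_, ?_⟩
    · rw [← hBLdef]; exact hcase.1
    · rw [← hALdef, ← hBLdef, div_le_div_iff₀ hBpos hcase.1]
      exact hcase.2
  · push_neg at hcase
    have hkey : 0 < BR ∧ A * BR ≤ AR * B := by
      rcases hBL0.lt_or_eq with hBLpos | hBLzero
      · have hlt : AL * B < A * BL := hcase hBLpos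
        have hALe : AL = 2 * A - AR := by linarith
        have hBLe : BL = 2 * B - BR := by linarith
        rw [hALe, hBLe] at hlt
        have hlt2 : A * BR < AR * B := by nlinarith
        have hBRpos : 0 < BR := by
          rcases hBR0.lt_or_eq with h | h
          · exact h
          · exfalso
            have hARz := hKzR h.symm
            rw [hARz, ← h] at hlt2
            simp at hlt2
        exact ⟨hBRpos, hlt2.le⟩
      · have hALz := hKzL hBLzero.symm
        have hBRe : BR = 2 * B := by linarith
        have hARe : AR = 2 * A := by linarith
        constructor
        · linarith
        · rw [hBRe, hARe]; ring_nf; exact le_refl _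
    refine ⟨symmR f n k, symmR g n k, Or.inr ⟨rfl, rfl⟩, hdisjR,
      haarC_symmR_self f n k, haarC_symmR_self g n k,
      htransR f hf hcf, htransR g hg hcg, ?_, ?_⟩
    · rw [← hBRdef]; exact hkey.1
    · rw [← hARdef, ← hBRdef, div_le_div_iff₀ hBpos hkey.1]
      exact hkey.2
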